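/- Let C be a locally cartesian closed category and t : E → X a morphism. Form X × t : X × E → X × X as the pullback of t along the second projection pr₂ : X × X → X. Then the map (t, id) : E → X × E, viewed as a morphism (ΔX)∘t → X × t in C/(X × X), induces by adjunction an isomorphism β : t ≅ Π_{pr₁}((X × t)^{ΔX}) in C/X, where pr₁ : X × X → X is the first projection and (X × t)^{ΔX} is the exponential in C/(X×X) with base the diagonal ΔX viewed as an object over X × X. -/

import Mathlib

open CategoryTheory CategoryTheory.Limits MonoidalCategory CartesianMonoidalCategory

open scoped CartesianClosed

universe v u

set_option linter.unusedSectionVars false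

namespace Stmt19Aux

open CategoryTheory CategoryTheory.Limits MonoidalCategory CartesianMonoidalCategory

variable {C : Type u} [Category.{v} C]

/-- Hand-rolled Yoneda argument: a family of hom-equivalences natural in the source
yields an isomorphism of the targets. -/
lemma iso_of_homEquiv {a b : C} (e : ∀ k : C, (k ⟶ a) ≃ (k ⟶ b))
    (nat : ∀ {k k' : C} (f : k' ⟶ k) (g : k ⟶ a), e k' (f ≫ g) = f ≫ e k g) :
    Nonempty (a ≅ b) := by
  have nat' : ∀ {k k' : C} (f : k' ⟶ k) (g : k ⟶ b),
      (e k').symm (f ≫ g) = f ≫ (e k).symm g := by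
    intro k k' f g
    apply (e k').injective
    rw [Equiv.apply_symm_apply, nat, Equiv.apply_symm_apply]
  refine ⟨⟨e a (𝟙 a), (e b).symm (𝟙 b), ?_, ?_⟩⟩
  · have h := nat' (e a (𝟙 a)) (𝟙 b)
    simpa using h.symm
  · have h := nat ((e b).symm (𝟙 b)) (𝟙 a)
    simpa using h.symm

variable [CartesianMonoidalCategory C] [HasPullbacks C]

/-- The square exhibiting `E` as the pullback of `X ◁ t` along the diagonal. -/
lemma isPullback_diag {E X : C} (t : E ⟶ X) :
    IsPullback (lift t (𝟙 E)) t (X ◁ t) (lift (𝟙 X) (𝟙 X)) := by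
  have eq : lift t (𝟙 E) ≫ (X ◁ t) = t ≫ lift (𝟙 X) (𝟙 X) := by
    apply CartesianMonoidalCategory.hom_ext <;> simp
  refine IsPullback.of_isLimit (PullbackCone.IsLimit.mk eq
    (fun s => s.fst ≫ snd X E) (fun s => ?_) (fun s => ?_) (fun s m hm _ => ?_)
    )
  · have h1 : s.fst ≫ (X ◁ t) = s.snd ≫ lift (𝟙 X) (𝟙 X) := s.condition
    have hf : s.fst ≫ fst X E = s.snd := by
      have := congrArg (· ≫ fst X X) h1
      simpa using this
    have hs : (s.fst ≫ snd X E) ≫ t = s.snd := by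
      have := congrArg (· ≫ snd X X) h1
      simpa using this
    apply CartesianMonoidalCategory.hom_ext <;> simp [hf, hs]
  · have h1 : s.fst ≫ (X ◁ t) = s.snd ≫ lift (𝟙 X) (𝟙 X) := s.condition
    have := congrArg (· ≫ snd X X) h1
    simpa using this
  · have := congrArg (· ≫ snd X E) hm
    simpa using this

section ProdIso

variable {Y W : C} (f : W ⟶ Y) [CartesianMonoidalCategory (Over Y)]

/-- Composite functor: pull back along `f`, then compose with `f`. -/
noncomputable abbrev PF : Over Y ⥤ Over Y := Over.pullback f ⋙ Over.map f

/-- First projection of the candidate product. -/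
noncomputable def π₁ (A : Over Y) : (PF f).obj A ⟶ Over.mk f :=
  Over.homMk (pullback.snd A.hom f) (by simp)

/-- Second projection of the candidate product. -/
noncomputable def π₂ (A : Over Y) : (PF f).obj A ⟶ A :=
  Over.homMk (pullback.fst A.hom f) (by simpa using pullback.condition)

/-- `(PF f).obj A` with the two projections is a binary product of `Over.mk f` and `A`. -/
noncomputable def fanIsLimit (A : Over Y) :
    IsLimit (BinaryFan.mk (π₁ f A) (π₂ f A)) :=
  BinaryFan.isLimitMk
    (fun s => Over.homMk
      (pullback.lift s.snd.left s.fst.left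
        (by simpa using (Over.w s.snd).trans (Over.w s.fst).symm))
      (by erw [pullback.lift_snd_assoc]; exact Over.w s.fst))
    (fun s => by ext; simp [π₁]; exact pullback.lift_snd _ _ _)
    (fun s => by ext; simp [π₂]; exact pullback.lift_fst _ _ _)
    (fun s m h1 h2 => by
      ext
      apply pullback.hom_ext
      · erw [pullback.lift_fst]; simpa [π₂] using congrArg CommaMorphism.left h2
      · erw [pullback.lift_snd]; simpa [π₁] using congrArg CommaMorphism.left h1)

/-- The chosen binary product cone is a limit cone. -/
noncomputable def chosenIsLimit (A B : Over Y) :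
    IsLimit (BinaryFan.mk (fst A B) (snd A B)) :=
  BinaryFan.isLimitMk
    (fun s => lift s.fst s.snd)
    (fun s => lift_fst _ _)
    (fun s => lift_snd _ _)
    (fun s m h1 h2 => hom_ext _ _ (by erw [lift_fst]; simpa using h1) (by erw [lift_snd]; simpa using h2))

/-- The comparison isomorphism between `(PF f).obj A` and the chosen product. -/
noncomputable def prodIso (A : Over Y) : (PF f).obj A ≅ Over.mk f ⊗ A :=
  IsLimit.conePointUniqueUpToIso
    (t := BinaryFan.mk (fst (Over.mk f) A) (snd (Over.mk f) A))
    (fanIsLimit f A) (chosenIsLimit (Over.mk f) A)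

lemma prodIso_hom_fst (A : Over Y) : (prodIso f A).hom ≫ fst _ _ = π₁ f A := by
  simpa [prodIso] using
    (fanIsLimit f A).conePointUniqueUpToIso_hom_comp (chosenIsLimit (Over.mk f) A)
      ⟨WalkingPair.left⟩

lemma prodIso_hom_snd (A : Over Y) : (prodIso f A).hom ≫ snd _ _ = π₂ f A := by
  simpa [prodIso] using
    (fanIsLimit f A).conePointUniqueUpToIso_hom_comp (chosenIsLimit (Over.mk f) A)
      ⟨WalkingPair.right⟩

lemma PF_map_π₁ {A B : Over Y} (h : A ⟶ B) : (PF f).map h ≫ π₁ f B = π₁ f A := by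
  ext
  simp [π₁]
  exact pullback.lift_snd _ _ _

lemma PF_map_π₂ {A B : Over Y} (h : A ⟶ B) : (PF f).map h ≫ π₂ f B = π₂ f A ≫ h := by
  ext
  simp [π₂]
  exact pullback.lift_fst _ _ _

lemma prodIso_naturality {A B : Over Y} (h : A ⟶ B) :
    (PF f).map h ≫ (prodIso f B).hom = (prodIso f A).hom ≫ (Over.mk f ◁ h) := by
  apply CartesianMonoidalCategory.hom_ext
  · rw [Category.assoc, Category.assoc, whiskerLeft_fst, prodIso_hom_fst, prodIso_hom_fst,
      PF_map_π₁]
  · rw [Category.assoc, Category.assoc, whiskerLeft_snd, prodIso_hom_snd,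
    ← Category.assoc, prodIso_hom_snd, PF_map_π₂]

lemma prodIso_inv_naturality {A B : Over Y} (h : A ⟶ B) :
    (prodIso f A).inv ≫ (PF f).map h = (Over.mk f ◁ h) ≫ (prodIso f B).inv := by
  rw [Iso.inv_comp_eq, ← Category.assoc, Iso.eq_comp_inv, prodIso_naturality]

end ProdIso

end Stmt19Aux

open Stmt19Aux in
/-- Internal Yoneda lemma: for `t : E ⟶ X` in a locally cartesian closed category,
the map `(t, id) : (ΔX) ∘ t ⟶ X × t` in `C/(X × X)` induces by adjunction an
isomorphism `β : t ≅ Π_{pr₁} ((X × t)^{ΔX})` in `C/X`, where `X × t = X ◁ t` is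
the pullback of `t` along `pr₂` and the exponential is taken in `C/(X × X)`. -/
theorem stmt19 {C : Type u} [Category.{v} C] [CartesianMonoidalCategory C] [HasPullbacks C]
    {E X : C} (t : E ⟶ X)
    [CartesianMonoidalCategory (Over (X ⊗ X))] [MonoidalClosed (Over (X ⊗ X))]
    (Ppr : Over (X ⊗ X) ⥤ Over X)
    (adj : Over.pullback (fst X X) ⊣ Ppr) :
    Nonempty (Over.mk t ≅
      Ppr.obj ((Over.mk (lift (𝟙 X) (𝟙 X))) ⟹ (Over.mk (X ◁ t)))) := by
  classical
  set Δ : X ⟶ X ⊗ X := lift (𝟙 X) (𝟙 X) with hΔ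
  let D : Over (X ⊗ X) := Over.mk Δ
  let M : Over (X ⊗ X) := Over.mk (X ◁ t)
  let N : Over (X ⊗ X) := D ⟹ M
  let Q : Over X ⥤ Over (X ⊗ X) := Over.pullback (fst X X)
  -- the natural isomorphism `𝟭 ≅ Q ⋙ Δ*`
  have hcomp : Over.pullback (𝟙 X) = Over.pullback (Δ ≫ fst X X) := by
    simp only [hΔ, lift_fst]
  let η : 𝟭 (Over X) ≅ Q ⋙ Over.pullback Δ :=
    Over.pullbackId.symm ≪≫ eqToIso hcomp ≪≫ Over.pullbackComp Δ (fst X X)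
  -- the isomorphism `Over.mk t ≅ Δ* M`
  let τ : Over.mk t ≅ (Over.pullback Δ).obj M :=
    Over.isoMk (isPullback_diag t).isoPullback
      (by exact (isPullback_diag t).isoPullback_hom_snd)
  -- the hom-equivalence, natural in `k`
  let e : ∀ k : Over X, (k ⟶ Over.mk t) ≃ (k ⟶ Ppr.obj N) := fun k =>
    ((η.app k).homCongr τ).trans <|
      (((Over.mapPullbackAdj Δ).homEquiv ((Over.pullback Δ).obj (Q.obj k)) M).symm).trans <|
        ((prodIso Δ (Q.obj k)).homCongr (Iso.refl M)).trans <|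
          ((ihom.adjunction D).homEquiv (Q.obj k) M).trans <|
            adj.homEquiv k N
  have nat : ∀ {k k' : Over X} (f : k' ⟶ k) (g : k ⟶ Over.mk t),
      e k' (f ≫ g) = f ≫ e k g := by
    intro k k' f g
    show adj.homEquiv k' N ((ihom.adjunction D).homEquiv (Q.obj k') M
        ((prodIso Δ (Q.obj k')).inv ≫
          ((Over.mapPullbackAdj Δ).homEquiv _ M).symm
            ((η.app k').inv ≫ (f ≫ g) ≫ τ.hom) ≫ 𝟙 M)) =
      f ≫ adj.homEquiv k N ((ihom.adjunction D).homEquiv (Q.obj k) M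
        ((prodIso Δ (Q.obj k)).inv ≫
          ((Over.mapPullbackAdj Δ).homEquiv _ M).symm
            ((η.app k).inv ≫ g ≫ τ.hom) ≫ 𝟙 M))
    have step1 : (η.app k').inv ≫ (f ≫ g) ≫ τ.hom =
        (Q ⋙ Over.pullback Δ).map f ≫ ((η.app k).inv ≫ g ≫ τ.hom) := by
      have hnat := η.inv.naturality f
      simp only [Functor.id_map] at hnat
      simp only [Iso.app_inv]
      simp only [← Category.assoc]
      rw [hnat]
    rw [step1]
    have step2 : ((Over.mapPullbackAdj Δ).homEquiv ((Over.pullback Δ).obj (Q.obj k')) M).symm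
        ((Q ⋙ Over.pullback Δ).map f ≫ ((η.app k).inv ≫ g ≫ τ.hom)) =
        (Over.map Δ).map ((Over.pullback Δ).map (Q.map f)) ≫
          ((Over.mapPullbackAdj Δ).homEquiv _ M).symm ((η.app k).inv ≫ g ≫ τ.hom) :=
      Adjunction.homEquiv_naturality_left_symm _ _ _
    rw [step2]
    have step3 : (prodIso Δ (Q.obj k')).inv ≫
        ((Over.map Δ).map ((Over.pullback Δ).map (Q.map f)) ≫
          ((Over.mapPullbackAdj Δ).homEquiv _ M).symm ((η.app k).inv ≫ g ≫ τ.hom)) ≫ 𝟙 M =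
        (D ◁ Q.map f) ≫ ((prodIso Δ (Q.obj k)).inv ≫
          ((Over.mapPullbackAdj Δ).homEquiv _ M).symm ((η.app k).inv ≫ g ≫ τ.hom) ≫ 𝟙 M) := by
      simp only [Category.comp_id, ← Category.assoc]
      congr 1
      exact prodIso_inv_naturality Δ (Q.map f)
    rw [step3]
    have step4 : (ihom.adjunction D).homEquiv (Q.obj k') M
        ((D ◁ Q.map f) ≫ ((prodIso Δ (Q.obj k)).inv ≫
          ((Over.mapPullbackAdj Δ).homEquiv _ M).symm ((η.app k).inv ≫ g ≫ τ.hom) ≫ 𝟙 M)) =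
        Q.map f ≫ (ihom.adjunction D).homEquiv (Q.obj k) M
          ((prodIso Δ (Q.obj k)).inv ≫
            ((Over.mapPullbackAdj Δ).homEquiv _ M).symm ((η.app k).inv ≫ g ≫ τ.hom) ≫ 𝟙 M) := by
      have := Adjunction.homEquiv_naturality_left (ihom.adjunction D) (Q.map f)
        ((prodIso Δ (Q.obj k)).inv ≫
          ((Over.mapPullbackAdj Δ).homEquiv _ M).symm ((η.app k).inv ≫ g ≫ τ.hom) ≫ 𝟙 M)
      simpa using this
    rw [step4]
    exact adj.homEquiv_naturality_left f _
  exact iso_of_homEquiv e nat
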